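/- Let X be a countable regular space of π-weight κ, where κ has uncountable cofinality. Then there is β < κ and a non-empty open U ⊆ X such that every point of U has π-character exactly κ. -/
import Mathlib


open Set Topology

/-- The π-character of a point: the least cardinality of a local π-base at the point. -/
noncomputable def piCharacter {X : Type*} [TopologicalSpace X] (x : X) : Cardinal :=
  sInf { c | ∃ B : Set (Set X), Cardinal.mk B = c ∧ (∀ U ∈ B, IsOpen U ∧ U.Nonempty) ∧
    ∀ V : Set X, IsOpen V → x ∈ V → ∃ U ∈ B, U ⊆ V }
/-- The π-weight of a space: the least cardinality of a π-base, i.e. a family of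
nonempty open sets such that every nonempty open set contains a member. -/
noncomputable def piWeight (X : Type*) [TopologicalSpace X] : Cardinal :=
  sInf { c | ∃ B : Set (Set X), Cardinal.mk B = c ∧ (∀ U ∈ B, IsOpen U ∧ U.Nonempty) ∧
    ∀ V : Set X, IsOpen V → V.Nonempty → ∃ U ∈ B, U ⊆ V }

lemma piChar_set_nonempty {X : Type*} [TopologicalSpace X] (x : X) :
    { c | ∃ B : Set (Set X), Cardinal.mk B = c ∧ (∀ U ∈ B, IsOpen U ∧ U.Nonempty) ∧
      ∀ V : Set X, IsOpen V → x ∈ V → ∃ U ∈ B, U ⊆ V }.Nonempty :=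
  ⟨_, {V | IsOpen V ∧ V.Nonempty}, rfl, fun _ h => h,
    fun V hV hx => ⟨V, ⟨hV, ⟨x, hx⟩⟩, subset_rfl⟩⟩

lemma piCharacter_le_piWeight {X : Type*} [TopologicalSpace X] (x : X) :
    piCharacter x ≤ piWeight X := by
  apply le_csInf
  · exact ⟨_, {V | IsOpen V ∧ V.Nonempty}, rfl, fun _ h => h,
      fun V hV hx => ⟨V, ⟨hV, hx⟩, subset_rfl⟩⟩
  rintro c ⟨B, hB, hop, hbase⟩
  exact csInf_le' ⟨B, hB, hop, fun V hV hx => hbase V hV ⟨x, hx⟩⟩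

/-- If `X` is countable regular of π-weight κ with cf(κ) > ω, then there are β < κ and
a nonempty open `U ⊆ X` all of whose points have π-character exactly κ. -/
theorem statement18 {X : Type} [TopologicalSpace X] [T3Space X] [Countable X]
    (κ : Cardinal) (hw : piWeight X = κ)
    (hcof : Cardinal.aleph0 < κ.ord.cof) :
    ∃ β : Cardinal, β < κ ∧ ∃ U : Set X, IsOpen U ∧ U.Nonempty ∧
      ∀ x ∈ U, piCharacter x = κ := by
  set A : Set X := {x | piCharacter x < κ} with hA
  set β : Cardinal := ⨆ x : A, piCharacter x.1 with hβ
  have hβκ : β < κ := by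
    apply Ordinal.iSup_lt _ (fun x => x.2)
    exact lt_of_le_of_lt Cardinal.mk_le_aleph0 hcof
  refine ⟨β, hβκ, (closure A)ᶜ, isClosed_closure.isOpen_compl, ?_, ?_⟩
  · -- nonempty: otherwise closure A = univ, build small π-base
    rw [nonempty_compl]
    intro hdense
    -- choose local π-bases
    have hch : ∀ x : A, ∃ B : Set (Set X), Cardinal.mk B = piCharacter x.1 ∧
        (∀ U ∈ B, IsOpen U ∧ U.Nonempty) ∧
        ∀ V : Set X, IsOpen V → x.1 ∈ V → ∃ U ∈ B, U ⊆ V := by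
      intro x
      have := csInf_mem (piChar_set_nonempty x.1)
      exact this
    choose Bf hBf1 hBf2 hBf3 using hch
    set B : Set (Set X) := ⋃ x : A, Bf x with hBdef
    have hbase : ∀ V : Set X, IsOpen V → V.Nonempty → ∃ U ∈ B, U ⊆ V := by
      intro V hV hne
      have hVA : (V ∩ A).Nonempty := by
        have : Dense A := by rw [dense_iff_closure_eq, hdense]
        exact (this.inter_open_nonempty V hV hne).imp fun x hx => ⟨hx.1, hx.2⟩
      obtain ⟨x, hxV, hxA⟩ := hVA
      obtain ⟨U, hU, hUV⟩ := hBf3 ⟨x, hxA⟩ V hV hxV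
      exact ⟨U, mem_iUnion.2 ⟨⟨x, hxA⟩, hU⟩, hUV⟩
    have hcard : Cardinal.mk B ≤ Cardinal.aleph0 * β := by
      refine (Cardinal.mk_iUnion_le _).trans (mul_le_mul' Cardinal.mk_le_aleph0 ?_)
      exact ciSup_le' fun x => (hBf1 x).le.trans (le_ciSup (Cardinal.bddAbove_range _) x)
    have hlt : Cardinal.mk B < κ := by
      refine lt_of_le_of_lt hcard ?_
      calc Cardinal.aleph0 * β ≤ max (max Cardinal.aleph0 β) Cardinal.aleph0 :=
            Cardinal.mul_le_max _ _
        _ < κ := by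
            have hℵ : Cardinal.aleph0 < κ := lt_of_lt_of_le hcof (Ordinal.cof_ord_le κ)
            simp [max_lt, hℵ, hβκ]
    have : piWeight X ≤ Cardinal.mk B := csInf_le' ⟨B, rfl, by
      intro U hU; obtain ⟨x, hx⟩ := mem_iUnion.1 hU; exact hBf2 x U hx, hbase⟩
    rw [hw] at this
    exact absurd (lt_of_le_of_lt this hlt) (lt_irrefl κ)
  · intro x hx
    have h1 : piCharacter x ≤ κ := hw ▸ piCharacter_le_piWeight x
    have h2 : ¬ piCharacter x < κ := fun h => hx (subset_closure h)
    exact le_antisymm h1 (not_lt.1 h2)
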